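/- Suppose the CATE τ(X) is transportable between the trial distribution and the observational distribution, the trial satisfies internal validity with P(T=1)=π, and the support of the trial covariate distribution is included in that of the observational covariate distribution. Let Q_X be the observational covariate distribution restricted to the trial support, and let w(x) = dQ_X/dP^rct_X(x). Then E_{Q_X}[τ(X)] = E_{P^rct}[Y·(T/π − (1−T)/(1−π))·w(X)]. -/

import Mathlib

open MeasureTheory ProbabilityTheory Filter
open scoped ENNReal NNReal

/-- Lemma 2: let `μ` be the trial distribution with covariate
map `X`, binary treatment `T` with `P(T=1) = π`, potential outcomes `Y0, Y1`,
observed `Y = T·Y1 + (1−T)·Y0`, and internal validity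
(`T ⊥ (X, U, Y0, Y1)`).  Let `τ` be the common CATE (transportability:
`τ` is the CATE of both the trial and the observational distribution),
characterized by `∫ g(X)(Y1−Y0) dμ = ∫ g(X) τ(X) dμ` for bounded measurable
`g`.  Let `Q = (μ.map X).withDensity w` be the restricted observational
covariate distribution, whose density w.r.t. the trial covariate distribution
is the importance weight `w` (support inclusion).  Then
`E_Q[τ(X)] = E_μ[Y·(T/π − (1−T)/(1−π))·w(X)]`. -/
theorem transported_ipw_identification {Ω 𝒳 𝒰 : Type*} [MeasurableSpace Ω]
    [MeasurableSpace 𝒳] [MeasurableSpace 𝒰]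
    (μ : Measure Ω) [IsProbabilityMeasure μ]
    (X : Ω → 𝒳) (U : Ω → 𝒰) (Y0 Y1 Y T : Ω → ℝ) (π C : ℝ)
    (τ w : 𝒳 → ℝ) (Q : Measure 𝒳)
    (hX : Measurable X) (hU : Measurable U)
    (hY0 : Measurable Y0) (hY1 : Measurable Y1) (hT : Measurable T)
    (hτm : Measurable τ) (hwm : Measurable w) (hw0 : ∀ x, 0 ≤ w x)
    (hTbin : ∀ ω, T ω = 0 ∨ T ω = 1)
    (hY : ∀ ω, Y ω = T ω * Y1 ω + (1 - T ω) * Y0 ω)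
    (hbdd0 : ∀ ω, |Y0 ω| ≤ C) (hbdd1 : ∀ ω, |Y1 ω| ≤ C)
    (hπ : π ∈ Set.Ioo (0:ℝ) 1)
    (hπT : μ {ω | T ω = 1} = ENNReal.ofReal π)
    (hindep : IndepFun T (fun ω => (X ω, U ω, Y0 ω, Y1 ω)) μ)
    (hcate : ∀ g : 𝒳 → ℝ, Measurable g → (∀ x, |g x| ≤ 1) →
      ∫ ω, g (X ω) * (Y1 ω - Y0 ω) ∂μ = ∫ ω, g (X ω) * τ (X ω) ∂μ)
    (hQ : Q = (μ.map X).withDensity (fun x => ENNReal.ofReal (w x)))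
    [IsProbabilityMeasure Q]
    (hτint : Integrable τ Q)
    (hwint : Integrable (fun ω => Y ω * (T ω / π - (1 - T ω) / (1 - π)) * w (X ω)) μ) :
    ∫ x, τ x ∂Q
      = ∫ ω, Y ω * (T ω / π - (1 - T ω) / (1 - π)) * w (X ω) ∂μ := by
  obtain ⟨hπ0, hπ1⟩ := hπ
  have hπne : π ≠ 0 := ne_of_gt hπ0
  have h1π : (0:ℝ) < 1 - π := by linarith
  have h1πne : (1:ℝ) - π ≠ 0 := ne_of_gt h1π
  set ν : Measure 𝒳 := μ.map X with hν
  -- w is integrable w.r.t. ν since Q is a probability measure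
  have hQuniv : ∫⁻ x, ENNReal.ofReal (w x) ∂ν = 1 := by
    have h := measure_univ (μ := Q)
    rw [hQ, withDensity_apply _ MeasurableSet.univ, setLIntegral_univ] at h
    exact h
  have hwint_ν : Integrable w ν := by
    refine ⟨hwm.aestronglyMeasurable, ?_⟩
    simp only [HasFiniteIntegral]
    have : (fun x => ‖w x‖ₑ) = fun x => ENNReal.ofReal (w x) := by
      funext x; exact Real.enorm_eq_ofReal (hw0 x)
    rw [this, hQuniv]
    exact ENNReal.one_lt_top
  have hwX : Integrable (fun ω => w (X ω)) μ :=
    (integrable_map_measure hwm.aestronglyMeasurable hX.aemeasurable).mp hwint_ν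
  -- integrability of various products
  have hY1w : Integrable (fun ω => Y1 ω * w (X ω)) μ := by
    refine (hwX.const_mul C).mono'
      (hY1.mul (hwm.comp hX)).aestronglyMeasurable (ae_of_all _ fun ω => ?_)
    rw [Real.norm_eq_abs, abs_mul, abs_of_nonneg (hw0 _)]
    exact mul_le_mul_of_nonneg_right (hbdd1 ω) (hw0 _)
  have hY0w : Integrable (fun ω => Y0 ω * w (X ω)) μ := by
    refine (hwX.const_mul C).mono'
      (hY0.mul (hwm.comp hX)).aestronglyMeasurable (ae_of_all _ fun ω => ?_)
    rw [Real.norm_eq_abs, abs_mul, abs_of_nonneg (hw0 _)]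
    exact mul_le_mul_of_nonneg_right (hbdd0 ω) (hw0 _)
  have hTabs : ∀ ω, |T ω| ≤ 1 := by
    intro ω; rcases hTbin ω with h | h <;> simp [h]
  have hTint : Integrable T μ := by
    refine (integrable_const (1:ℝ)).mono' hT.aestronglyMeasurable (ae_of_all _ fun ω => ?_)
    simpa using hTabs ω
  have hTY1w : Integrable (fun ω => T ω * (Y1 ω * w (X ω))) μ := by
    refine (hwX.const_mul C).mono'
      (hT.mul (hY1.mul (hwm.comp hX))).aestronglyMeasurable (ae_of_all _ fun ω => ?_)
    show ‖T ω * (Y1 ω * w (X ω))‖ ≤ C * w (X ω)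
    rw [Real.norm_eq_abs, abs_mul, abs_mul, abs_of_nonneg (hw0 _)]
    calc |T ω| * (|Y1 ω| * w (X ω)) ≤ 1 * (|Y1 ω| * w (X ω)) :=
          mul_le_mul_of_nonneg_right (hTabs ω) (mul_nonneg (abs_nonneg _) (hw0 _))
      _ = |Y1 ω| * w (X ω) := one_mul _
      _ ≤ C * w (X ω) := mul_le_mul_of_nonneg_right (hbdd1 ω) (hw0 _)
  have h1Tabs : ∀ ω, |1 - T ω| ≤ 1 := by
    intro ω; rcases hTbin ω with h | h <;> simp [h]
  have h1TY0w : Integrable (fun ω => (1 - T ω) * (Y0 ω * w (X ω))) μ := by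
    refine (hwX.const_mul C).mono'
      (((measurable_const.sub hT)).mul (hY0.mul (hwm.comp hX))).aestronglyMeasurable
      (ae_of_all _ fun ω => ?_)
    show ‖(1 - T ω) * (Y0 ω * w (X ω))‖ ≤ C * w (X ω)
    rw [Real.norm_eq_abs, abs_mul, abs_mul, abs_of_nonneg (hw0 _)]
    calc |1 - T ω| * (|Y0 ω| * w (X ω)) ≤ 1 * (|Y0 ω| * w (X ω)) :=
          mul_le_mul_of_nonneg_right (h1Tabs ω) (mul_nonneg (abs_nonneg _) (hw0 _))
      _ = |Y0 ω| * w (X ω) := one_mul _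
      _ ≤ C * w (X ω) := mul_le_mul_of_nonneg_right (hbdd0 ω) (hw0 _)
  -- E[T] = π
  have hET : ∫ ω, T ω ∂μ = π := by
    have hs : MeasurableSet {ω | T ω = 1} := hT (measurableSet_singleton 1)
    have h1 : ∫ ω, T ω ∂μ = ∫ ω, Set.indicator {ω | T ω = 1} (1 : Ω → ℝ) ω ∂μ := by
      refine integral_congr_ae (ae_of_all _ fun ω => ?_)
      rcases hTbin ω with h | h <;> simp [Set.indicator, h]
      
    rw [h1, integral_indicator_one hs, measureReal_def, hπT, ENNReal.toReal_ofReal hπ0.le]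
  have hE1T : ∫ ω, (1 - T ω) ∂μ = 1 - π := by
    rw [integral_sub (integrable_const 1) hTint, integral_const, hET]
    simp
  -- independence consequences
  have hI1 : IndepFun T (fun ω => Y1 ω * w (X ω)) μ :=
    hindep.comp measurable_id
      ((measurable_snd.snd.snd).mul (hwm.comp measurable_fst))
  have hI0 : IndepFun (fun ω => 1 - T ω) (fun ω => Y0 ω * w (X ω)) μ :=
    hindep.comp (measurable_const.sub measurable_id)
      ((measurable_snd.snd.fst).mul (hwm.comp measurable_fst))
  have hprod1 : ∫ ω, T ω * (Y1 ω * w (X ω)) ∂μ = π * ∫ ω, Y1 ω * w (X ω) ∂μ := by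
    exact hET ▸ hI1.integral_fun_mul_eq_mul_integral hTint.aestronglyMeasurable hY1w.aestronglyMeasurable
  have hprod0 : ∫ ω, (1 - T ω) * (Y0 ω * w (X ω)) ∂μ
      = (1 - π) * ∫ ω, Y0 ω * w (X ω) ∂μ := by
    exact hE1T ▸ hI0.integral_fun_mul_eq_mul_integral ((integrable_const 1).sub hTint).aestronglyMeasurable hY0w.aestronglyMeasurable
  -- pointwise rewriting of the RHS integrand
  have hptw : ∀ ω, Y ω * (T ω / π - (1 - T ω) / (1 - π)) * w (X ω)
      = (1/π) * (T ω * (Y1 ω * w (X ω)))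
        - (1/(1-π)) * ((1 - T ω) * (Y0 ω * w (X ω))) := by
    intro ω
    rcases hTbin ω with h | h <;> rw [hY ω, h] <;> field_simp <;> ring
  -- RHS equals ∫ w(X)(Y1 - Y0)
  have hRHS : ∫ ω, Y ω * (T ω / π - (1 - T ω) / (1 - π)) * w (X ω) ∂μ
      = ∫ ω, w (X ω) * (Y1 ω - Y0 ω) ∂μ := by
    calc ∫ ω, Y ω * (T ω / π - (1 - T ω) / (1 - π)) * w (X ω) ∂μ
        = ∫ ω, ((1/π) * (T ω * (Y1 ω * w (X ω)))
            - (1/(1-π)) * ((1 - T ω) * (Y0 ω * w (X ω)))) ∂μ :=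
          integral_congr_ae (ae_of_all _ hptw)
      _ = (1/π) * ∫ ω, T ω * (Y1 ω * w (X ω)) ∂μ
            - (1/(1-π)) * ∫ ω, (1 - T ω) * (Y0 ω * w (X ω)) ∂μ := by
          rw [integral_sub (hTY1w.const_mul _) (h1TY0w.const_mul _),
            integral_const_mul, integral_const_mul]
      _ = ∫ ω, Y1 ω * w (X ω) ∂μ - ∫ ω, Y0 ω * w (X ω) ∂μ := by
          rw [hprod1, hprod0]; field_simp
      _ = ∫ ω, (Y1 ω * w (X ω) - Y0 ω * w (X ω)) ∂μ := (integral_sub hY1w hY0w).symm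
      _ = ∫ ω, w (X ω) * (Y1 ω - Y0 ω) ∂μ :=
          integral_congr_ae (ae_of_all _ fun ω => by ring)
  -- integrability of w·τ
  have hwτν : Integrable (fun x => w x * τ x) ν := by
    rw [hQ] at hτint
    have hfm : Measurable fun x => (w x).toNNReal := hwm.real_toNNReal
    have heq : (fun x => ENNReal.ofReal (w x))
        = fun x => ((w x).toNNReal : ℝ≥0∞) := rfl
    rw [heq] at hτint
    have h := (integrable_withDensity_iff_integrable_smul hfm).mp hτint
    refine h.congr (ae_of_all _ fun x => ?_)
    show (w x).toNNReal • τ x = w x * τ x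
    rw [NNReal.smul_def, Real.coe_toNNReal _ (hw0 x), smul_eq_mul]
  have hwτ : Integrable (fun ω => w (X ω) * τ (X ω)) μ :=
    (integrable_map_measure (hwm.mul hτm).aestronglyMeasurable hX.aemeasurable).mp hwτν
  have hY10 : Integrable (fun ω => w (X ω) * (Y1 ω - Y0 ω)) μ := by
    refine (hwX.const_mul (2*C)).mono'
      ((hwm.comp hX).mul (hY1.sub hY0)).aestronglyMeasurable (ae_of_all _ fun ω => ?_)
    rw [Real.norm_eq_abs, abs_mul, abs_of_nonneg (hw0 _)]
    have : |Y1 ω - Y0 ω| ≤ 2 * C := by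
      calc |Y1 ω - Y0 ω| ≤ |Y1 ω| + |Y0 ω| := abs_sub _ _
        _ ≤ 2 * C := by have := hbdd0 ω; have := hbdd1 ω; linarith
    calc w (X ω) * |Y1 ω - Y0 ω| ≤ w (X ω) * (2*C) :=
          mul_le_mul_of_nonneg_left this (hw0 _)
      _ = 2 * C * w (X ω) := by ring
  -- the key identity via truncation
  have hmin : ∀ n : ℕ, ∫ ω, min (w (X ω)) n * (Y1 ω - Y0 ω) ∂μ
      = ∫ ω, min (w (X ω)) n * τ (X ω) ∂μ := by
    intro n
    rcases Nat.eq_zero_or_pos n with h0 | hn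
    · have hz : ∀ ω, min (w (X ω)) ((n:ℝ)) = 0 := by
        intro ω; rw [h0]; simpa using min_eq_right (hw0 (X ω))
      simp only [hz, zero_mul, integral_zero]
    · have hnpos : (0:ℝ) < n := by exact_mod_cast hn
      have hgm : Measurable fun x => min (w x) n / n :=
        (hwm.min measurable_const).div_const _
      have hgb : ∀ x, |min (w x) (n:ℝ) / n| ≤ 1 := by
        intro x
        rw [abs_div, abs_of_nonneg (le_min (hw0 x) hnpos.le), abs_of_pos hnpos]
        rw [div_le_one hnpos]
        exact min_le_right _ _
      have hg := hcate _ hgm hgb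
      have e1 : ∀ z : ℝ, ∀ ω, min (w (X ω)) (n:ℝ) / n * z
          = (1/(n:ℝ)) * (min (w (X ω)) n * z) := by intro z ω; ring
      simp only [e1] at hg
      rw [integral_const_mul, integral_const_mul] at hg
      exact mul_left_cancel₀ (by positivity) hg
  have hkey : ∫ ω, w (X ω) * (Y1 ω - Y0 ω) ∂μ = ∫ ω, w (X ω) * τ (X ω) ∂μ := by
    have hlim1 : Tendsto (fun n : ℕ => ∫ ω, min (w (X ω)) n * (Y1 ω - Y0 ω) ∂μ)
        atTop (nhds (∫ ω, w (X ω) * (Y1 ω - Y0 ω) ∂μ)) := by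
      refine tendsto_integral_of_dominated_convergence (fun ω => 2 * C * w (X ω))
        (fun n => (((hwm.comp hX).min measurable_const).mul
          (hY1.sub hY0)).aestronglyMeasurable)
        (hwX.const_mul (2*C)) (fun n => ae_of_all _ fun ω => ?_)
        (ae_of_all _ fun ω => ?_)
      · show ‖min (w (X ω)) n * (Y1 ω - Y0 ω)‖ ≤ 2 * C * w (X ω)
        rw [Real.norm_eq_abs, abs_mul, abs_of_nonneg (le_min (hw0 _) (Nat.cast_nonneg n))]
        have h2 : |Y1 ω - Y0 ω| ≤ 2 * C := by
          calc |Y1 ω - Y0 ω| ≤ |Y1 ω| + |Y0 ω| := abs_sub _ _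
            _ ≤ 2 * C := by have := hbdd0 ω; have := hbdd1 ω; linarith
        calc min (w (X ω)) n * |Y1 ω - Y0 ω| ≤ w (X ω) * (2*C) :=
              mul_le_mul (min_le_left _ _) h2 (abs_nonneg _) (hw0 _)
          _ = 2 * C * w (X ω) := by ring
      · refine Tendsto.congr' ?_ tendsto_const_nhds
        filter_upwards [eventually_ge_atTop ⌈w (X ω)⌉₊] with n hn
        have : min (w (X ω)) (n:ℝ) = w (X ω) :=
          min_eq_left ((Nat.le_ceil _).trans (by exact_mod_cast hn))
        rw [this]
    have hlim2 : Tendsto (fun n : ℕ => ∫ ω, min (w (X ω)) n * τ (X ω) ∂μ)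
        atTop (nhds (∫ ω, w (X ω) * τ (X ω) ∂μ)) := by
      refine tendsto_integral_of_dominated_convergence (fun ω => |w (X ω) * τ (X ω)|)
        (fun n => (((hwm.comp hX).min measurable_const).mul
          (hτm.comp hX)).aestronglyMeasurable)
        hwτ.abs (fun n => ae_of_all _ fun ω => ?_)
        (ae_of_all _ fun ω => ?_)
      · show ‖min (w (X ω)) n * τ (X ω)‖ ≤ |w (X ω) * τ (X ω)|
        rw [Real.norm_eq_abs, abs_mul, abs_of_nonneg (le_min (hw0 _) (Nat.cast_nonneg n)),
          abs_mul, abs_of_nonneg (hw0 _)]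
        exact mul_le_mul_of_nonneg_right (min_le_left _ _) (abs_nonneg _)
      · refine Tendsto.congr' ?_ tendsto_const_nhds
        filter_upwards [eventually_ge_atTop ⌈w (X ω)⌉₊] with n hn
        have : min (w (X ω)) (n:ℝ) = w (X ω) :=
          min_eq_left ((Nat.le_ceil _).trans (by exact_mod_cast hn))
        rw [this]
    exact tendsto_nhds_unique ((tendsto_congr hmin).mp hlim1) hlim2
  -- LHS equals ∫ w(X) τ(X) dμ
  have hLHS : ∫ x, τ x ∂Q = ∫ ω, w (X ω) * τ (X ω) ∂μ := by
    rw [hQ]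
    have heq : (fun x => ENNReal.ofReal (w x))
        = fun x => (((w x).toNNReal : ℝ≥0) : ℝ≥0∞) := rfl
    rw [heq, integral_withDensity_eq_integral_smul (f := fun x => (w x).toNNReal) hwm.real_toNNReal]
    have h2 : ∀ x, (w x).toNNReal • τ x = w x * τ x := by
      intro x; rw [NNReal.smul_def, Real.coe_toNNReal _ (hw0 x), smul_eq_mul]
    simp only [h2]
    exact integral_map hX.aemeasurable (hwm.mul hτm).aestronglyMeasurable
  rw [hLHS, hRHS, hkey]
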